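/- Consider the discrete KdV flow ∂v/∂t = −(1/4)∂_x R(v² − 4u), ∂u/∂t = 0, and the first extended flow ∂v/∂τ = ∂_x[−v³/24 + uv/2 − (1/8)R(R^{−1}v·(v²−4u)) − (ε²/32)R(v·∂_x²R(v²−4u))], ∂u/∂τ = u·u_x, where R = (2/(iε∂_x))·(Λ−1)/(Λ+1) with Λ = e^{iε∂_x}. In the dispersionless limit ε = 0 (where R = 1), these two flows on pairs of functions (u(x), v(x)) commute: the flows ∂v/∂t = −(1/4)∂_x(v²−4u) = −(1/2)v·v_x + u_x, ∂u/∂t = 0 and ∂v/∂τ = ∂_x(−v³/24 + uv/2 − (1/8)v(v²−4u)) = ∂_x(−v³/6 + uv), ∂u/∂τ = u·u_x satisfy D_t D_τ v = D_τ D_t v and D_t D_τ u = D_τ D_t u as identities of differential polynomials in u, v. -/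

import Mathlib

open MvPolynomial

/-! Differential polynomials in two variables `u, v` over ℂ: elements of
`ℂ[[u₀,v₀]][u₁,v₁,u₂,v₂,…]`, modeled as `MvPolynomial (Fin 2 × ℕ) (MvPowerSeries (Fin 2) ℂ)`
where the variable `X (i,n)` stands for `u_{n+1}` (if `i = 0`) or `v_{n+1}` (if `i = 1`),
and the coefficient ring consists of power series in `u₀, v₀`. -/

/-- The ring of differential polynomials in two variables. -/
abbrev DiffPoly2 := MvPolynomial (Fin 2 × ℕ) (MvPowerSeries (Fin 2) ℂ)

/-- Partial derivative of a power series in `u₀,v₀` with respect to the `i`-th variable. -/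
noncomputable def mvDeriv (i : Fin 2) (f : MvPowerSeries (Fin 2) ℂ) :
    MvPowerSeries (Fin 2) ℂ :=
  fun e => (e i + 1) • MvPowerSeries.coeff (e + Finsupp.single i 1) f

/-- `∂/∂u₀` (for `i = 0`) resp. `∂/∂v₀` (for `i = 1`) on differential polynomials. -/
noncomputable def dV0 (i : Fin 2) (p : DiffPoly2) : DiffPoly2 :=
  p.support.sum fun m => monomial m (mvDeriv i (coeff m p))

/-- The total `x`-derivative `∂_x`, determined by `∂_x u_n = u_{n+1}`, `∂_x v_n = v_{n+1}`. -/
noncomputable def dX2 (p : DiffPoly2) : DiffPoly2 :=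
  (∑ i : Fin 2, X (i, 0) * dV0 i p) + ∑ w ∈ p.vars, pderiv w p * X (w.1, w.2 + 1)

/-- The partial linearization along the `i`-th variable family:
`∑_{n≥0} (∂q/∂(u or v)_n) ∂_x^n g`. -/
noncomputable def lin2 (i : Fin 2) (q g : DiffPoly2) : DiffPoly2 :=
  dV0 i q * g + ∑ w ∈ q.vars.filter (fun w => w.1 = i), pderiv w q * dX2^[w.2 + 1] g

/-- The evolutionary derivation attached to a flow `∂u/∂t = a`, `∂v/∂t = b`. -/
noncomputable def evolDer (a b p : DiffPoly2) : DiffPoly2 :=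
  lin2 0 p a + lin2 1 p b

/-- The element `u₀`. -/
noncomputable def uu : DiffPoly2 := MvPolynomial.C (MvPowerSeries.X 0)

/-- The element `v₀`. -/
noncomputable def vv : DiffPoly2 := MvPolynomial.C (MvPowerSeries.X 1)

abbrev R2 := MvPowerSeries (Fin 2) ℂ

namespace Aux

lemma coeff_mvDeriv (i : Fin 2) (f : R2) (e : Fin 2 →₀ ℕ) :
    MvPowerSeries.coeff e (mvDeriv i f)
      = (e i + 1) • MvPowerSeries.coeff (e + Finsupp.single i 1) f := rfl

lemma mvDeriv_zero (i : Fin 2) : mvDeriv i 0 = 0 := by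
  apply MvPowerSeries.ext; intro e
  rw [coeff_mvDeriv]; simp

lemma mvDeriv_add (i : Fin 2) (f g : R2) :
    mvDeriv i (f + g) = mvDeriv i f + mvDeriv i g := by
  apply MvPowerSeries.ext; intro e
  rw [map_add, coeff_mvDeriv, coeff_mvDeriv, coeff_mvDeriv, map_add, smul_add]

lemma mvDeriv_smul (i : Fin 2) (r : ℂ) (f : R2) :
    mvDeriv i (r • f) = r • mvDeriv i f := by
  apply MvPowerSeries.ext; intro e
  rw [map_smul, coeff_mvDeriv, coeff_mvDeriv, map_smul, smul_comm]

lemma mvDeriv_monomial_add (i : Fin 2) (m : Fin 2 →₀ ℕ) (a : ℂ) :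
    mvDeriv i (MvPowerSeries.monomial (m + Finsupp.single i 1) a)
      = MvPowerSeries.monomial m ((m i + 1 : ℕ) • a) := by
  apply MvPowerSeries.ext; intro e
  rw [coeff_mvDeriv, MvPowerSeries.coeff_monomial, MvPowerSeries.coeff_monomial]
  by_cases h : e = m
  · subst h; simp
  · rw [if_neg (by simpa using h), if_neg h, smul_zero]

lemma mvDeriv_monomial_zero (i : Fin 2) (m : Fin 2 →₀ ℕ) (a : ℂ) (h : m i = 0) :
    mvDeriv i (MvPowerSeries.monomial m a) = 0 := by
  apply MvPowerSeries.ext; intro e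
  rw [coeff_mvDeriv, MvPowerSeries.coeff_monomial, if_neg, smul_zero, map_zero]
  intro he
  have := DFunLike.congr_fun he i
  simp [h] at this

end Aux

open Aux

namespace Aux2

noncomputable abbrev U : R2 := MvPowerSeries.X 0
noncomputable abbrev V : R2 := MvPowerSeries.X 1

lemma mvDeriv_one (i : Fin 2) : mvDeriv i 1 = 0 := by
  have : (1 : R2) = MvPowerSeries.monomial 0 1 := by
    simp [MvPowerSeries.monomial_zero_eq_C_apply]
  rw [this, mvDeriv_monomial_zero]
  simp

lemma mvDeriv_X (i j : Fin 2) :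
    mvDeriv i (MvPowerSeries.X j : R2) = if i = j then 1 else 0 := by
  rw [MvPowerSeries.X_def]
  by_cases h : i = j
  · subst h
    have : (Finsupp.single i 1 : Fin 2 →₀ ℕ) = 0 + Finsupp.single i 1 := by simp
    rw [if_pos rfl, this, mvDeriv_monomial_add]
    simp [MvPowerSeries.monomial_zero_eq_C_apply]
  · rw [if_neg h, mvDeriv_monomial_zero]
    simp [Finsupp.single_apply, Ne.symm h]

lemma U_eq : U = MvPowerSeries.monomial (Finsupp.single 0 1) 1 := MvPowerSeries.X_def 0
lemma V_eq : V = MvPowerSeries.monomial (Finsupp.single 1 1) 1 := MvPowerSeries.X_def 1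

lemma UV_eq : U * V = MvPowerSeries.monomial (Finsupp.single 1 1 + Finsupp.single 0 1) 1 := by
  rw [U_eq, V_eq, MvPowerSeries.monomial_mul_monomial, add_comm, mul_one]

lemma mvDeriv_UV_0 : mvDeriv 0 (U * V) = V := by
  rw [UV_eq, mvDeriv_monomial_add 0 (Finsupp.single 1 1) 1, V_eq]
  norm_num

lemma VU_eq : U * V = MvPowerSeries.monomial (Finsupp.single 0 1 + Finsupp.single 1 1) 1 := by
  rw [UV_eq, add_comm]

lemma mvDeriv_UV_1 : mvDeriv 1 (U * V) = U := by
  rw [VU_eq, mvDeriv_monomial_add 1 (Finsupp.single 0 1) 1, U_eq]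
  norm_num

lemma V_pow (n : ℕ) : (V : R2) ^ n = MvPowerSeries.monomial (Finsupp.single 1 n) 1 := by
  induction n with
  | zero => simp [MvPowerSeries.monomial_zero_eq_C_apply]
  | succ n ih =>
    rw [pow_succ, ih, V_eq, MvPowerSeries.monomial_mul_monomial]
    rw [mul_one, ← Finsupp.single_add]

lemma mvDeriv_V3 : mvDeriv 1 (V ^ 3) = (3 : ℂ) • V ^ 2 := by
  rw [V_pow 3, V_pow 2]
  have h3 : (Finsupp.single (1 : Fin 2) 3) = Finsupp.single 1 2 + Finsupp.single 1 1 := by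
    rw [← Finsupp.single_add]
  rw [h3, mvDeriv_monomial_add 1 (Finsupp.single 1 2) 1, ← map_smul]
  congr 1
  norm_num

end Aux2



namespace Aux3
open Aux Aux2

lemma dV0_eq_of_subset (i : Fin 2) (p : DiffPoly2) (s : Finset ((Fin 2 × ℕ) →₀ ℕ))
    (hs : p.support ⊆ s) :
    dV0 i p = ∑ m ∈ s, monomial m (mvDeriv i (coeff m p)) := by
  rw [dV0]
  exact Finset.sum_subset hs (fun m _ hm => by
    rw [MvPolynomial.notMem_support_iff.mp hm, mvDeriv_zero, map_zero])

lemma dV0_zero (i : Fin 2) : dV0 i 0 = 0 := by simp [dV0]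

lemma dV0_add (i : Fin 2) (p q : DiffPoly2) :
    dV0 i (p + q) = dV0 i p + dV0 i q := by
  classical
  rw [dV0_eq_of_subset i p (p.support ∪ q.support) Finset.subset_union_left,
      dV0_eq_of_subset i q (p.support ∪ q.support) Finset.subset_union_right,
      dV0_eq_of_subset i (p + q) (p.support ∪ q.support)
        (MvPolynomial.support_add (p := p) (q := q)),
      ← Finset.sum_add_distrib]
  refine Finset.sum_congr rfl fun m _ => ?_
  rw [MvPolynomial.coeff_add, mvDeriv_add, map_add]

lemma dV0_monomial (i : Fin 2) (m : (Fin 2 × ℕ) →₀ ℕ) (c : R2) :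
    dV0 i (monomial m c) = monomial m (mvDeriv i c) := by
  classical
  rw [dV0_eq_of_subset i _ {m} MvPolynomial.support_monomial_subset, Finset.sum_singleton,
    MvPolynomial.coeff_monomial, if_pos rfl]

lemma dV0_C (i : Fin 2) (c : R2) : dV0 i (MvPolynomial.C c) = MvPolynomial.C (mvDeriv i c) := by
  rw [← MvPolynomial.monomial_zero', dV0_monomial, MvPolynomial.monomial_zero']

lemma dV0_C_mul_X (i : Fin 2) (c : R2) (w : Fin 2 × ℕ) :
    dV0 i (MvPolynomial.C c * X w) = MvPolynomial.C (mvDeriv i c) * X w := by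
  rw [MvPolynomial.C_mul_X_eq_monomial, MvPolynomial.C_mul_X_eq_monomial, dV0_monomial]

lemma dV0_X (i : Fin 2) (w : Fin 2 × ℕ) : dV0 i (X w) = 0 := by
  have := dV0_C_mul_X i 1 w
  rw [map_one, one_mul, mvDeriv_one, map_zero, zero_mul] at this
  exact this

lemma dV0_smul (i : Fin 2) (r : ℂ) (p : DiffPoly2) :
    dV0 i (r • p) = r • dV0 i p := by
  classical
  rw [dV0_eq_of_subset i (r • p) p.support (MvPolynomial.support_smul),
      dV0, Finset.smul_sum]
  refine Finset.sum_congr rfl fun m _ => ?_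
  rw [MvPolynomial.coeff_smul, mvDeriv_smul, MvPolynomial.smul_monomial]

end Aux3

namespace Aux4
open Aux Aux2 Aux3

lemma dX2_eq_of_subset (p : DiffPoly2) (S : Finset (Fin 2 × ℕ)) (hS : p.vars ⊆ S) :
    dX2 p = (∑ i : Fin 2, X (i, 0) * dV0 i p) + ∑ w ∈ S, pderiv w p * X (w.1, w.2 + 1) := by
  rw [dX2]
  congr 1
  exact Finset.sum_subset hS (fun w _ hw => by
    rw [MvPolynomial.pderiv_eq_zero_of_notMem_vars hw, zero_mul])

lemma lin2_eq_of_subset (i : Fin 2) (q g : DiffPoly2) (S : Finset (Fin 2 × ℕ))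
    (hS : q.vars ⊆ S) :
    lin2 i q g = dV0 i q * g
      + ∑ w ∈ S.filter (fun w => w.1 = i), pderiv w q * dX2^[w.2 + 1] g := by
  rw [lin2]
  congr 1
  refine Finset.sum_subset (Finset.filter_subset_filter _ hS) (fun w hw hw' => ?_)
  have : w ∉ q.vars := fun h => hw' (Finset.mem_filter.mpr ⟨h, (Finset.mem_filter.mp hw).2⟩)
  rw [MvPolynomial.pderiv_eq_zero_of_notMem_vars this, zero_mul]

lemma dX2_zero : dX2 0 = 0 := by
  rw [dX2_eq_of_subset 0 ∅ (by simp [MvPolynomial.vars_0])]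
  simp [dV0_zero]

lemma lin2_zero_right (i : Fin 2) (q : DiffPoly2) : lin2 i q 0 = 0 := by
  rw [lin2]
  have hiter : ∀ n, dX2^[n] (0 : DiffPoly2) = 0 := by
    intro n; induction n with
    | zero => rfl
    | succ n ih => rw [Function.iterate_succ_apply, dX2_zero, ih]
  simp [hiter]

lemma vars_C_mul_X (c : R2) (w : Fin 2 × ℕ) :
    (MvPolynomial.C c * X w : DiffPoly2).vars ⊆ {w} := by
  classical
  refine (MvPolynomial.vars_mul _ _).trans ?_
  rw [MvPolynomial.vars_C, MvPolynomial.vars_X]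
  simp

lemma vars_smul (r : ℂ) (p : DiffPoly2) : (r • p).vars ⊆ p.vars := by
  classical
  intro w hw
  rw [MvPolynomial.mem_vars] at hw ⊢
  obtain ⟨m, hm, hwm⟩ := hw
  exact ⟨m, MvPolynomial.support_smul hm, hwm⟩

end Aux4

namespace Main
open Aux Aux2 Aux3 Aux4

noncomputable def aa : R2 := (-(1/2) : ℂ) • V
noncomputable def aa' : R2 := (-(1/2) : ℂ) • (1 : R2)
noncomputable def Wc : R2 := U + aa * V
noncomputable def mc : R2 := aa' * V + aa

abbrev wu : Fin 2 × ℕ := (0, 0)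
abbrev wv : Fin 2 × ℕ := (1, 0)

lemma smul_C_mul_X (r : ℂ) (c : R2) (w : Fin 2 × ℕ) :
    r • (MvPolynomial.C c * X w : DiffPoly2) = MvPolynomial.C (r • c) * X w := by
  rw [MvPolynomial.C_mul_X_eq_monomial, MvPolynomial.C_mul_X_eq_monomial,
    MvPolynomial.smul_monomial]

lemma smul_C (r : ℂ) (c : R2) :
    r • (MvPolynomial.C c : DiffPoly2) = MvPolynomial.C (r • c) := by
  rw [← MvPolynomial.monomial_zero', MvPolynomial.smul_monomial]

lemma AvEq : ((-(1 / 2) : ℂ) • (vv * X (1, 0)) + X (0, 0) : DiffPoly2)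
    = MvPolynomial.C aa * X wv + X wu := by
  rw [vv, smul_C_mul_X]; rfl

lemma BuEq : (uu * X (0, 0) : DiffPoly2) = MvPolynomial.C U * X wu := rfl

lemma mvDeriv_0_V_pow (n : ℕ) : mvDeriv 0 (V ^ n) = 0 := by
  rw [V_pow, mvDeriv_monomial_zero]
  simp

lemma mvDeriv_V2 : mvDeriv 1 (V ^ 2) = (2 : ℂ) • V := by
  rw [V_pow 2]
  have h2 : (Finsupp.single (1 : Fin 2) 2) = Finsupp.single 1 1 + Finsupp.single 1 1 := by
    rw [← Finsupp.single_add]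
  rw [h2, mvDeriv_monomial_add 1 (Finsupp.single 1 1) 1, V_eq, ← map_smul]
  congr 1
  norm_num

lemma aaV : aa * V = (-(1/2) : ℂ) • V ^ 2 := by
  rw [aa, smul_mul_assoc, pow_two]

lemma mvDeriv_0_W : mvDeriv 0 Wc = 1 := by
  rw [Wc, mvDeriv_add, aaV, mvDeriv_smul, mvDeriv_0_V_pow, mvDeriv_X]
  simp

lemma mvDeriv_1_W : mvDeriv 1 Wc = mc := by
  rw [Wc, mvDeriv_add, aaV, mvDeriv_smul, mvDeriv_V2, mvDeriv_X, mc, aa', aa]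
  rw [smul_smul, smul_mul_assoc, one_mul, ← add_smul]
  norm_num

lemma mvDeriv_0_aa : mvDeriv 0 aa = 0 := by
  rw [aa, mvDeriv_smul, mvDeriv_X]
  simp

lemma mvDeriv_1_aa : mvDeriv 1 aa = aa' := by
  rw [aa, aa', mvDeriv_smul, mvDeriv_X]
  norm_num

lemma innerEq : ((-(1 / 6) : ℂ) • vv ^ 3 + uu * vv : DiffPoly2)
    = MvPolynomial.C ((-(1/6) : ℂ) • V ^ 3 + U * V) := by
  rw [vv, uu, ← map_pow, ← map_mul, smul_C, ← map_add]

lemma mvDeriv_0_inner : mvDeriv 0 ((-(1/6) : ℂ) • V ^ 3 + U * V) = V := by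
  rw [mvDeriv_add, mvDeriv_smul, mvDeriv_0_V_pow, mvDeriv_UV_0]
  simp

lemma mvDeriv_1_inner : mvDeriv 1 ((-(1/6) : ℂ) • V ^ 3 + U * V) = Wc := by
  rw [mvDeriv_add, mvDeriv_smul, mvDeriv_V3, mvDeriv_UV_1, Wc, aaV, smul_smul]
  norm_num [add_comm]

lemma dX2_C (c : R2) : dX2 (MvPolynomial.C c)
    = X (0,0) * MvPolynomial.C (mvDeriv 0 c) + X (1,0) * MvPolynomial.C (mvDeriv 1 c) := by
  rw [dX2_eq_of_subset _ ∅ (by rw [MvPolynomial.vars_C])]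
  rw [Finset.sum_empty, Fin.sum_univ_two, dV0_C, dV0_C, add_zero]

lemma BvEq : dX2 ((-(1 / 6) : ℂ) • vv ^ 3 + uu * vv)
    = MvPolynomial.C V * X wu + MvPolynomial.C Wc * X wv := by
  rw [innerEq, dX2_C, mvDeriv_0_inner, mvDeriv_1_inner, mul_comm (X wu), mul_comm (X wv)]

end Main

namespace Main2
open Aux Aux2 Aux3 Aux4 Main

noncomputable abbrev Cc : R2 → DiffPoly2 := MvPolynomial.C

lemma dV0_Av (i : Fin 2) : dV0 i (Cc aa * X wv + X wu)
    = Cc (mvDeriv i aa) * X wv := by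
  rw [dV0_add, dV0_C_mul_X, dV0_X, add_zero]

lemma dV0_Bu (i : Fin 2) : dV0 i (Cc U * X wu) = Cc (mvDeriv i U) * X wu :=
  dV0_C_mul_X i U wu

lemma dV0_Bv (i : Fin 2) : dV0 i (Cc V * X wu + Cc Wc * X wv)
    = Cc (mvDeriv i V) * X wu + Cc (mvDeriv i Wc) * X wv := by
  rw [dV0_add, dV0_C_mul_X, dV0_C_mul_X]

lemma vars_pair_Av : (Cc aa * X wv + X wu : DiffPoly2).vars ⊆ {wu, wv} := by
  refine (MvPolynomial.vars_add_subset _ _).trans (Finset.union_subset ?_ ?_)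
  · exact (vars_C_mul_X _ _).trans (by intro x hx; simp at hx; simp [hx])
  · rw [MvPolynomial.vars_X]; intro x hx; simp at hx; simp [hx]

lemma vars_pair_Bu : (Cc U * X wu : DiffPoly2).vars ⊆ {wu, wv} :=
  (vars_C_mul_X _ _).trans (by intro x hx; simp at hx; simp [hx])

lemma vars_pair_Bv : (Cc V * X wu + Cc Wc * X wv : DiffPoly2).vars ⊆ {wu, wv} := by
  refine (MvPolynomial.vars_add_subset _ _).trans (Finset.union_subset ?_ ?_)
  · exact (vars_C_mul_X _ _).trans (by intro x hx; simp at hx; simp [hx])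
  · exact (vars_C_mul_X _ _).trans (by intro x hx; simp at hx; simp [hx])

lemma vars_pair_zero : (0 : DiffPoly2).vars ⊆ {wu, wv} := by
  rw [MvPolynomial.vars_0]; exact Finset.empty_subset _

lemma lin2_eq_single (i : Fin 2) (q g : DiffPoly2) (hvars : q.vars ⊆ {wu, wv}) :
    lin2 i q g = dV0 i q * g + pderiv (i, 0) q * dX2 g := by
  rw [lin2]
  congr 1
  have hsub : q.vars.filter (fun w => w.1 = i) ⊆ {((i, 0) : Fin 2 × ℕ)} := by
    intro w hw
    rw [Finset.mem_filter] at hw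
    obtain ⟨h1, h2⟩ := hw
    have h3 := hvars h1
    simp only [Finset.mem_insert, Finset.mem_singleton] at h3
    have hw2 : w.2 = 0 := by rcases h3 with h | h <;> simp [h]
    simp [Prod.ext_iff, h2, hw2]
  rw [Finset.sum_subset hsub]
  · rw [Finset.sum_singleton, Function.iterate_one]
  · intro w hw hw'
    simp only [Finset.mem_singleton] at hw
    subst hw
    rw [Finset.mem_filter, not_and] at hw'
    have : (i, 0) ∉ q.vars := fun h => hw' h rfl
    rw [MvPolynomial.pderiv_eq_zero_of_notMem_vars this, zero_mul]

lemma dX2_eq_pair (q : DiffPoly2) (hvars : q.vars ⊆ {wu, wv}) :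
    dX2 q = X (0, 0) * dV0 0 q + X (1, 0) * dV0 1 q
      + (pderiv wu q * X (0, 1) + pderiv wv q * X (1, 1)) := by
  rw [dX2_eq_of_subset q {wu, wv} hvars, Fin.sum_univ_two]
  congr 1
  rw [Finset.sum_insert (by decide), Finset.sum_singleton]

lemma pd_Av_u : pderiv wu (Cc aa * X wv + X wu) = 1 := by
  simp [MvPolynomial.pderiv_C_mul, MvPolynomial.pderiv_X_of_ne (show wv ≠ wu by decide),
    MvPolynomial.pderiv_X_self]

lemma pd_Av_v : pderiv wv (Cc aa * X wv + X wu) = Cc aa := by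
  simp [MvPolynomial.pderiv_C_mul, MvPolynomial.pderiv_X_of_ne (show wu ≠ wv by decide),
    MvPolynomial.pderiv_X_self]

lemma pd_Bu_u : pderiv wu (Cc U * X wu) = Cc U := by
  simp [MvPolynomial.pderiv_C_mul, MvPolynomial.pderiv_X_self]

lemma pd_Bu_v : pderiv wv (Cc U * X wu) = 0 := by
  simp [MvPolynomial.pderiv_C_mul, MvPolynomial.pderiv_X_of_ne (show wu ≠ wv by decide)]

lemma pd_Bv_u : pderiv wu (Cc V * X wu + Cc Wc * X wv) = Cc V := by
  simp [MvPolynomial.pderiv_C_mul, MvPolynomial.pderiv_X_of_ne (show wv ≠ wu by decide),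
    MvPolynomial.pderiv_X_self]

lemma pd_Bv_v : pderiv wv (Cc V * X wu + Cc Wc * X wv) = Cc Wc := by
  simp [MvPolynomial.pderiv_C_mul, MvPolynomial.pderiv_X_of_ne (show wu ≠ wv by decide),
    MvPolynomial.pderiv_X_self]

end Main2

namespace Main3
open Aux Aux2 Aux3 Aux4 Main Main2

lemma hAv0 : dV0 0 (Cc aa * X wv + X wu) = 0 := by
  rw [dV0_Av, mvDeriv_0_aa]
  simp

lemma hAv1 : dV0 1 (Cc aa * X wv + X wu) = Cc aa' * X wv := by
  rw [dV0_Av, mvDeriv_1_aa]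

lemma hBu0 : dV0 0 (Cc U * X wu) = X wu := by
  rw [dV0_Bu, mvDeriv_X]
  norm_num

lemma hBu1 : dV0 1 (Cc U * X wu) = 0 := by
  rw [dV0_Bu, mvDeriv_X]
  simp

lemma hBv0 : dV0 0 (Cc V * X wu + Cc Wc * X wv) = X wv := by
  rw [dV0_Bv, mvDeriv_X, mvDeriv_0_W]
  simp

lemma hBv1 : dV0 1 (Cc V * X wu + Cc Wc * X wv) = X wu + Cc mc * X wv := by
  rw [dV0_Bv, mvDeriv_X, mvDeriv_1_W]
  simp

lemma hdAv : dX2 (Cc aa * X wv + X wu)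
    = Cc aa' * (X wv * X wv) + X (0, 1) + Cc aa * X (1, 1) := by
  rw [dX2_eq_pair _ vars_pair_Av, hAv0, hAv1, pd_Av_u, pd_Av_v]
  ring

lemma hdBu : dX2 (Cc U * X wu) = X wu * X wu + Cc U * X (0, 1) := by
  rw [dX2_eq_pair _ vars_pair_Bu, hBu0, hBu1, pd_Bu_u, pd_Bu_v]
  ring

lemma hdBv : dX2 (Cc V * X wu + Cc Wc * X wv)
    = X wu * X wv + X wv * (X wu + Cc mc * X wv) + Cc V * X (0, 1) + Cc Wc * X (1, 1) := by
  rw [dX2_eq_pair _ vars_pair_Bv, hBv0, hBv1, pd_Bv_u, pd_Bv_v]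
  ring

lemma part1 :
    evolDer 0 ((-(1 / 2) : ℂ) • (vv * X (1, 0)) + X (0, 0)) (uu * X (0, 0))
      = evolDer (uu * X (0, 0)) (dX2 ((-(1 / 6) : ℂ) • vv ^ 3 + uu * vv)) 0 := by
  rw [AvEq, BuEq, BvEq, evolDer, evolDer,
    lin2_eq_single 1 (Cc U * X wu) (Cc aa * X wv + X wu) vars_pair_Bu,
    lin2_eq_single 0 0 (Cc U * X wu) vars_pair_zero,
    lin2_eq_single 1 0 (Cc V * X wu + Cc Wc * X wv) vars_pair_zero,
    lin2_zero_right, hBu1, pd_Bu_v, dV0_zero, dV0_zero]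
  simp

lemma part2 :
    evolDer 0 ((-(1 / 2) : ℂ) • (vv * X (1, 0)) + X (0, 0))
        (dX2 ((-(1 / 6) : ℂ) • vv ^ 3 + uu * vv))
      = evolDer (uu * X (0, 0)) (dX2 ((-(1 / 6) : ℂ) • vv ^ 3 + uu * vv))
        ((-(1 / 2) : ℂ) • (vv * X (1, 0)) + X (0, 0)) := by
  rw [AvEq, BuEq, BvEq, evolDer, evolDer,
    lin2_eq_single 1 (Cc V * X wu + Cc Wc * X wv) (Cc aa * X wv + X wu) vars_pair_Bv,
    lin2_eq_single 0 (Cc aa * X wv + X wu) (Cc U * X wu) vars_pair_Av,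
    lin2_eq_single 1 (Cc aa * X wv + X wu) (Cc V * X wu + Cc Wc * X wv) vars_pair_Av,
    lin2_zero_right, hBv1, pd_Bv_v, hAv0, hAv1, pd_Av_u, pd_Av_v, hdAv, hdBu, hdBv,
    zero_add, mc, Wc]
  simp only [map_add, map_mul]
  ring

end Main3

/-- the dispersionless (ε = 0) discrete KdV flow
`∂u/∂t = 0`, `∂v/∂t = −(1/2)v·v_x + u_x` commutes with the dispersionless first
extended flow `∂u/∂τ = u·u_x`, `∂v/∂τ = ∂_x(−v³/6 + u·v)`:
`D_t D_τ = D_τ D_t` on both `u` and `v`. -/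
theorem dispersionless_flows_commute :
    let Au : DiffPoly2 := 0
    let Av : DiffPoly2 := (-(1 / 2) : ℂ) • (vv * X (1, 0)) + X (0, 0)
    let Bu : DiffPoly2 := uu * X (0, 0)
    let Bv : DiffPoly2 := dX2 ((-(1 / 6) : ℂ) • vv ^ 3 + uu * vv)
    evolDer Au Av Bu = evolDer Bu Bv Au ∧ evolDer Au Av Bv = evolDer Bu Bv Av :=
  ⟨Main3.part1, Main3.part2⟩
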